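/- (Symmetric form of the projector G₋ = E⁻¹∘W⁻¹∘Ĩ.) For every integrable h : α → ℝ and every x ∈ α, applying E⁻¹ to the function W⁻¹·(h − ⟨h⟩) gives (G₋ h)(x); that is, E⁻¹( W⁻¹·(h − ⟨h⟩·1) )(x) = W(x)⁻¹·h(x) − W(x)⁻¹·(∫ W⁻¹·h dμ)/(∫ W⁻¹ dμ). -/

import Mathlib

open MeasureTheory

/-- Total (coordinate) volume `V := μ(α)` as a real number. -/
noncomputable def totalVol {α : Type*} [MeasurableSpace α] (μ : Measure α) : ℝ :=
  (μ Set.univ).toReal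

/-- Spatial average `⟨f⟩ := (1/V) ∫ f dμ`. -/
noncomputable def avg {α : Type*} [MeasurableSpace α] (μ : Measure α) (f : α → ℝ) : ℝ :=
  (totalVol μ)⁻¹ * ∫ x, f x ∂μ

/-- The delocalization operator `E`:
`(E g)(x) = g(x) + ⟨g⟩ − W(x)⁻¹ ⟨W·g⟩`. -/
noncomputable def opE {α : Type*} [MeasurableSpace α] (μ : Measure α) (W : α → ℝ)
    (g : α → ℝ) : α → ℝ :=
  fun x => g x + avg μ g - (W x)⁻¹ * avg μ (fun y => W y * g y)

/-- The operator `E⁻¹`: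
`(E⁻¹ h)(x) = h(x) − W(x)⁻¹ (∫h)/(∫W⁻¹) − (∫W·h)/(∫W) + 2 W(x)⁻¹ V (∫W·h)/((∫W⁻¹)(∫W))`. -/
noncomputable def opEinv {α : Type*} [MeasurableSpace α] (μ : Measure α) (W : α → ℝ)
    (h : α → ℝ) : α → ℝ :=
  fun x => h x
    - (W x)⁻¹ * (∫ y, h y ∂μ) / (∫ y, (W y)⁻¹ ∂μ)
    - (∫ y, W y * h y ∂μ) / (∫ y, W y ∂μ)
    + 2 * (W x)⁻¹ * totalVol μ * (∫ y, W y * h y ∂μ)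
        / ((∫ y, (W y)⁻¹ ∂μ) * (∫ y, W y ∂μ))

/-- The projector-type operator `G₊`:
`(G₊ h)(x) = W(x)·h(x) − W(x)·(∫W·h)/(∫W)`. -/
noncomputable def opGplus {α : Type*} [MeasurableSpace α] (μ : Measure α) (W : α → ℝ)
    (h : α → ℝ) : α → ℝ :=
  fun x => W x * h x - W x * (∫ y, W y * h y ∂μ) / (∫ y, W y ∂μ)

/-- The projector-type operator `G₋`:
`(G₋ h)(x) = W(x)⁻¹·h(x) − W(x)⁻¹·(∫W⁻¹·h)/(∫W⁻¹)`. -/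
noncomputable def opGminus {α : Type*} [MeasurableSpace α] (μ : Measure α) (W : α → ℝ)
    (h : α → ℝ) : α → ℝ :=
  fun x => (W x)⁻¹ * h x - (W x)⁻¹ * (∫ y, (W y)⁻¹ * h y ∂μ) / (∫ y, (W y)⁻¹ ∂μ)

/-- Symmetric form of the projector `G₋ = E⁻¹∘W⁻¹∘Ĩ`.
For every integrable `h` and every `x`, applying `E⁻¹` to the function `W⁻¹·(h − ⟨h⟩)`
gives `(G₋ h)(x)`:
`E⁻¹(W⁻¹·(h − ⟨h⟩·1))(x) = W(x)⁻¹·h(x) − W(x)⁻¹·(∫ W⁻¹·h dμ)/(∫ W⁻¹ dμ)`. -/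
theorem opGminus_symmetric_form
    {α : Type*} [MeasurableSpace α] (μ : Measure α) [IsFiniteMeasure μ]
    (hV : 0 < totalVol μ)
    (W : α → ℝ) (hW : Measurable W)
    (c C : ℝ) (hc : 0 < c) (hcC : c ≤ C)
    (hbound : ∀ x, c ≤ W x ∧ W x ≤ C) :
    ∀ h : α → ℝ, Integrable h μ → ∀ x,
      opEinv μ W (fun y => (W y)⁻¹ * (h y - avg μ h)) x
        = (W x)⁻¹ * h x
          - (W x)⁻¹ * (∫ y, (W y)⁻¹ * h y ∂μ) / (∫ y, (W y)⁻¹ ∂μ) := by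
  intro h hh x
  have hWpos : ∀ y, 0 < W y := fun y => lt_of_lt_of_le hc (hbound y).1
  have hWne : ∀ y, W y ≠ 0 := fun y => (hWpos y).ne'
  set a := avg μ h with ha
  have hint_h' : Integrable (fun y => h y - a) μ := hh.sub (integrable_const a)
  have hWinv_meas : Measurable fun y => (W y)⁻¹ := hW.inv
  have hbdd : ∀ y, ‖(W y)⁻¹‖ ≤ c⁻¹ := by
    intro y
    rw [Real.norm_eq_abs, abs_of_pos (inv_pos.2 (hWpos y))]
    exact inv_anti₀ hc (hbound y).1
  have hint_g : Integrable (fun y => (W y)⁻¹ * (h y - a)) μ :=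
    hint_h'.bdd_mul hWinv_meas.aestronglyMeasurable (ae_of_all _ hbdd)
  have hint_Winvh : Integrable (fun y => (W y)⁻¹ * h y) μ :=
    hh.bdd_mul hWinv_meas.aestronglyMeasurable (ae_of_all _ hbdd)
  have hint_Winv : Integrable (fun y => (W y)⁻¹) μ := by
    have := (integrable_const (μ := μ) (1:ℝ)).bdd_mul hWinv_meas.aestronglyMeasurable (ae_of_all _ hbdd)
    simpa using this
  have hVne : totalVol μ ≠ 0 := hV.ne'
  have key : ∫ y, W y * ((W y)⁻¹ * (h y - a)) ∂μ = 0 := by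
    have he : ∀ y, W y * ((W y)⁻¹ * (h y - a)) = h y - a := by
      intro y; rw [← mul_assoc, mul_inv_cancel₀ (hWne y), one_mul]
    simp_rw [he]
    rw [integral_sub hh (integrable_const a), integral_const, smul_eq_mul, measureReal_def, ha]
    simp only [avg, totalVol]
    have hne : (μ Set.univ).toReal ≠ 0 := hVne
    field_simp
    ring
  have hsplit : ∫ y, (W y)⁻¹ * (h y - a) ∂μ
      = (∫ y, (W y)⁻¹ * h y ∂μ) - (∫ y, (W y)⁻¹ ∂μ) * a := by
    have he : ∀ y, (W y)⁻¹ * (h y - a) = (W y)⁻¹ * h y - (W y)⁻¹ * a := by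
      intro y; ring
    simp_rw [he]
    rw [integral_sub hint_Winvh (hint_Winv.mul_const a), integral_mul_const]
  have hWinvpos : 0 < ∫ y, (W y)⁻¹ ∂μ := by
    have hle : ∀ y, C⁻¹ ≤ (W y)⁻¹ := fun y =>
      inv_anti₀ (lt_of_lt_of_le hc (hbound y).1) (hbound y).2
    have := integral_mono (integrable_const (C⁻¹ : ℝ)) hint_Winv hle
    rw [integral_const, smul_eq_mul, measureReal_def] at this
    have hCpos : 0 < C := lt_of_lt_of_le hc hcC
    have hpos : 0 < (μ Set.univ).toReal * C⁻¹ :=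
      mul_pos hV (inv_pos.2 hCpos)
    linarith
  have hWinvne : (∫ y, (W y)⁻¹ ∂μ) ≠ 0 := hWinvpos.ne'
  simp only [opEinv]
  rw [key, hsplit]
  set A := ∫ y, (W y)⁻¹ * h y ∂μ with hA
  set I := ∫ y, (W y)⁻¹ ∂μ with hI
  rw [zero_div, mul_zero, zero_div]
  have hkey : (W x)⁻¹ * (A - I * a) / I = (W x)⁻¹ * A / I - (W x)⁻¹ * a := by
    rw [mul_sub, sub_div]
    congr 1
    rw [mul_comm I a, ← mul_assoc, mul_div_cancel_right₀ _ hWinvne]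
  rw [hkey]
  ring
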